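/- Let G be a finite simple graph with vertex set V, let A and B be distinct non-adjacent vertices, and let k ≥ 1. If A and B are weakly k-hyper-connected in G, then A and B are k-connected in G, i.e., there exist k pairwise internally disjoint paths between A and B in G. -/

import Mathlib

open SimpleGraph

/-- The closed neighborhood `N[x]` is disjoint from `S`. -/
def ClosedNbhdDisj {V : Type*} (G : SimpleGraph V) (S : Finset V) (x : V) : Prop :=
  ∀ u ∈ S, ¬ (x = u ∨ G.Adj x u)

/-- `A` and `B` are weakly `k`-hyper-connected: for every `S ⊆ V \ {A,B}` with
`|S| < k` there is a path from `A` to `B` avoiding `S` such that for every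
edge `{x, y}` of the path, `N[x] ∩ S = ∅` or `N[y] ∩ S = ∅`. -/
def WeaklyHyperConnected {V : Type*} (G : SimpleGraph V) (A B : V) (k : ℕ) : Prop :=
  ∀ S : Finset V, A ∉ S → B ∉ S → S.card < k →
    ∃ p : G.Walk A B, p.IsPath ∧ (∀ v ∈ p.support, v ∉ S) ∧
      p.support.Chain' (fun x y => ClosedNbhdDisj G S x ∨ ClosedNbhdDisj G S y)

/-- `A` and `B` are `k`-connected: there exist `k` pairwise internally
disjoint paths between `A` and `B`. -/
def KConnected {V : Type*} (G : SimpleGraph V) (A B : V) (k : ℕ) : Prop :=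
  ∃ p : Fin k → G.Walk A B,
    (∀ i, (p i).IsPath) ∧
    ∀ i j, i ≠ j → ∀ v, v ∈ (p i).support → v ∈ (p j).support → v = A ∨ v = B

set_option linter.unusedSectionVars false
set_option maxHeartbeats 1000000

namespace MengerAux
open scoped Classical

variable {V : Type*} [Fintype V] [DecidableEq V]

/-- walk avoids a finset -/
def Avoids {G : SimpleGraph V} {a b : V} (w : G.Walk a b) (S : Finset V) : Prop :=
  ∀ v ∈ w.support, v ∉ S

/-- for every small S there is a path avoiding S -/
def AvoidHyp (G : SimpleGraph V) (A B : V) (k : ℕ) : Prop :=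
  ∀ S : Finset V, A ∉ S → B ∉ S → S.card < k → ∃ p : G.Walk A B, p.IsPath ∧ Avoids p S

lemma AvoidHyp.symm {G : SimpleGraph V} {A B : V} {k : ℕ} (h : AvoidHyp G A B k) :
    AvoidHyp G B A k := by
  intro S hB hA hcard
  obtain ⟨p, hp, hav⟩ := h S hA hB hcard
  exact ⟨p.reverse, hp.reverse, fun v hv => hav v (by simpa [Walk.support_reverse] using hv)⟩

lemma neighbor_card_ge {G : SimpleGraph V} {A B : V} {k : ℕ}
    (hAB : A ≠ B) (hnadj : ¬ G.Adj A B) (hAv : AvoidHyp G A B k) :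
    k ≤ (G.neighborSet B).ncard := by
  by_contra hlt
  push_neg at hlt
  obtain ⟨p, hp, hav⟩ := hAv (Set.toFinite (G.neighborSet B)).toFinset
    (by simp only [Set.Finite.mem_toFinset, mem_neighborSet]; exact fun h => hnadj h.symm)
    (by simp) (by rwa [← Set.ncard_eq_toFinset_card])
  obtain ⟨c, hadj, q, hq⟩ := Walk.exists_eq_cons_of_ne hAB.symm p.reverse
  have hc : c ∈ p.support := by
    have : c ∈ p.reverse.support := by rw [hq]; simp
    simpa [Walk.support_reverse] using this
  exact hav c hc (by simp only [Set.Finite.mem_toFinset, mem_neighborSet]; exact hadj)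

end MengerAux

namespace MengerAux2
open MengerAux

variable {V : Type*} [Fintype V] [DecidableEq V]

/-- vertices reachable from `A` by walks avoiding `S₀` -/
def Reach (G : SimpleGraph V) (A : V) (S₀ : Finset V) : Set V :=
  {v | ∃ w : G.Walk A v, Avoids w S₀}

lemma Reach.self {G : SimpleGraph V} {A : V} {S₀ : Finset V} (hA : A ∉ S₀) :
    A ∈ Reach G A S₀ := ⟨Walk.nil, by intro v hv; simp at hv; simpa [hv]⟩

lemma Reach.not_mem_S {G : SimpleGraph V} {A v : V} {S₀ : Finset V}
    (h : v ∈ Reach G A S₀) : v ∉ S₀ := by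
  obtain ⟨w, hw⟩ := h
  exact hw v w.end_mem_support

lemma Reach.extend {G : SimpleGraph V} {A v w : V} {S₀ : Finset V}
    (h : v ∈ Reach G A S₀) (hadj : G.Adj v w) (hw : w ∉ S₀) : w ∈ Reach G A S₀ := by
  obtain ⟨p, hp⟩ := h
  refine ⟨p.concat hadj, fun u hu => ?_⟩
  rw [Walk.support_concat] at hu
  rw [List.mem_append] at hu
  simp only [List.mem_singleton] at hu
  rcases hu with hu | hu
  · exact hp u hu
  · simpa [hu]

lemma Reach.join {G : SimpleGraph V} {A B v : V} {S₀ : Finset V}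
    (h1 : v ∈ Reach G A S₀) (h2 : v ∈ Reach G B S₀) :
    ∃ w : G.Walk A B, Avoids w S₀ := by
  obtain ⟨p, hp⟩ := h1
  obtain ⟨q, hq⟩ := h2
  refine ⟨p.append q.reverse, fun u hu => ?_⟩
  rw [Walk.mem_support_append_iff] at hu
  rcases hu with hu | hu
  · exact hp u hu
  · exact hq u (by simpa [Walk.support_reverse] using hu)

end MengerAux2

namespace MengerAux3
open MengerAux MengerAux2

variable {V : Type*} [Fintype V] [DecidableEq V]

lemma orient {G : SimpleGraph V} {A B x y : V} {S₀ : Finset V}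
    (hSep : ¬ ∃ w : (G.deleteEdges {s(x,y)}).Walk A B, Avoids w S₀) :
    ∀ {c b : V} (W : G.Walk c b), b = B → W.IsPath → Avoids W S₀ →
      c ∈ Reach (G.deleteEdges {s(x,y)}) A S₀ →
      (x ∈ Reach (G.deleteEdges {s(x,y)}) A S₀ ∧ y ∈ Reach (G.deleteEdges {s(x,y)}) B S₀) ∨
      (y ∈ Reach (G.deleteEdges {s(x,y)}) A S₀ ∧ x ∈ Reach (G.deleteEdges {s(x,y)}) B S₀) := by
  intro c b W
  induction W with
  | nil =>
    intro hb _ _ hc2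
    subst hb
    exact absurd (Reach.join hc2 (Reach.self (fun hB => (Reach.not_mem_S hc2) hB)) ) hSep
  | @cons c d b hadj q ih =>
    intro hb hW hav hc
    subst b
    have hdS : d ∉ S₀ := hav d (by simp)
    by_cases he : s(c,d) = s(x,y)
    · -- the walk crosses the special edge here
      have hnotin : ∀ e' ∈ q.edges, e' ∉ ({s(x,y)} : Set (Sym2 V)) := by
        intro e' he' hmem
        simp only [Set.mem_singleton_iff] at hmem
        have : s(c,d) ∈ q.edges := by rw [hmem] at he'; rwa [he]
        have htrail := hW.isTrail.edges_nodup
        simp only [Walk.edges_cons] at htrail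
        exact (List.nodup_cons.mp htrail).1 this
      have hd : d ∈ Reach (G.deleteEdges {s(x,y)}) B S₀ := by
        refine ⟨(q.toDeleteEdges {s(x,y)} hnotin).reverse, fun u hu => ?_⟩
        rw [Walk.support_reverse, List.mem_reverse] at hu
        rw [Walk.toDeleteEdges, Walk.support_transfer] at hu
        exact hav u (by simp [hu])
      rcases Sym2.eq_iff.mp he with ⟨rfl, rfl⟩ | ⟨rfl, rfl⟩
      · exact Or.inl ⟨hc, hd⟩
      · exact Or.inr ⟨hc, hd⟩
    · have hadj' : (G.deleteEdges {s(x,y)}).Adj c d := by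
        rw [deleteEdges_adj]
        exact ⟨hadj, by simpa using he⟩
      exact ih rfl hW.of_cons (fun u hu => hav u (by simp [hu])) (Reach.extend hc hadj' hdS)

end MengerAux3

namespace MengerSide
open MengerAux MengerAux2 MengerAux3

variable {V : Type*} [Fintype V] [DecidableEq V]

lemma side {G : SimpleGraph V} {k : ℕ} {A B x y : V} {e : Sym2 V} {S₀ : Finset V}
    (IH : ∀ G₂ : SimpleGraph V, G₂.edgeSet.ncard < G.edgeSet.ncard →
        ∀ A' B' : V, A' ≠ B' → ¬ G₂.Adj A' B' → AvoidHyp G₂ A' B' k → KConnected G₂ A' B' k)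
    (hAB : A ≠ B) (hnadj : ¬ G.Adj A B) (hAv : AvoidHyp G A B k)
    (hxy : G.Adj x y) (he : e = s(x,y))
    (hxA : x ≠ A) (hxB : x ≠ B) (hyA : y ≠ A) (hyB : y ≠ B)
    (hAS : A ∉ S₀) (hBS : B ∉ S₀) (hyS : y ∉ S₀) (hScard : S₀.card < k)
    (hxRA : x ∈ Reach (G.deleteEdges {e}) A S₀)
    (hyRA : y ∉ Reach (G.deleteEdges {e}) A S₀)
    (hBRA : B ∉ Reach (G.deleteEdges {e}) A S₀) :
    ∃ (t : Fin k → V) (Q : ∀ i, G.Walk A (t i)),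
      Function.Injective t ∧ (∀ i, t i ∈ insert x S₀) ∧ (∀ v ∈ insert x S₀, ∃ i, t i = v) ∧
      (∀ i, (Q i).IsPath) ∧
      (∀ i, ∀ v ∈ (Q i).support,
        v = t i ∨ (v ∈ Reach (G.deleteEdges {e}) A S₀ ∧ v ∉ insert x S₀)) ∧
      (∀ i j, i ≠ j → ∀ v, v ∈ (Q i).support → v ∈ (Q j).support → v = A) := by
  set G' := G.deleteEdges {e} with hG'
  set RA := Reach G' A S₀ with hRA
  set TA : Finset V := insert x S₀ with hTA
  set U : Set V := RA ∪ ↑TA with hU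
  have hxS : x ∉ S₀ := Reach.not_mem_S hxRA
  have hyx : y ≠ x := fun h => hyRA (h ▸ hxRA)
  have hARA : A ∈ RA := Reach.self hAS
  have hATA : A ∉ TA := by simp [hTA, Ne.symm hxA, hAS]
  have hBTA : B ∉ TA := by simp [hTA, Ne.symm hxB, hBS]
  have hBU : B ∉ U := by simp [hU, hBRA, hBTA]
  have hyTA : y ∉ TA := by simp [hTA, hyx, hyS]
  have hyU : y ∉ U := by simp [hU, hyRA, hyTA]
  have hAU : A ∈ U := Or.inl hARA
  -- the auxiliary graph
  set GA : SimpleGraph V := {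
    Adj := fun u v => (G.Adj u v ∧ u ∈ U ∧ v ∈ U) ∨ (u = B ∧ v ∈ TA) ∨ (v = B ∧ u ∈ TA)
    symm := by
      constructor
      rintro u v (⟨h1, h2, h3⟩ | ⟨h1, h2⟩ | ⟨h1, h2⟩)
      · exact Or.inl ⟨h1.symm, h3, h2⟩
      · exact Or.inr (Or.inr ⟨h1, h2⟩)
      · exact Or.inr (Or.inl ⟨h1, h2⟩)
    loopless := by
      constructor
      rintro v (⟨h1, _, _⟩ | ⟨h1, h2⟩ | ⟨h1, h2⟩)
      · exact G.irrefl h1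
      · exact hBTA (h1 ▸ h2)
      · exact hBTA (h1 ▸ h2) } with hGA
  have hGA_B : ∀ v, GA.Adj B v ↔ v ∈ TA := by
    intro v
    constructor
    · rintro (⟨_, h2, _⟩ | ⟨_, h2⟩ | ⟨h1, h2⟩)
      · exact absurd h2 hBU
      · exact h2
      · exact absurd (h1 ▸ h2) hBTA
    · intro hv
      exact Or.inr (Or.inl ⟨rfl, hv⟩)
  have hGA_nb : ∀ u v, GA.Adj u v → u ≠ B → v ≠ B → (G.Adj u v ∧ u ∈ U ∧ v ∈ U) := by
    rintro u v (h | ⟨h1, _⟩ | ⟨h1, _⟩) hu hv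
    · exact h
    · exact absurd h1 hu
    · exact absurd h1 hv
  have hnadjA : ¬ GA.Adj A B := by
    rintro (⟨h1, _, _⟩ | ⟨h1, _⟩ | ⟨_, h2⟩)
    · exact hnadj h1
    · exact hAB h1
    · exact hATA h2
  -- GA satisfies the avoidance hypothesis
  have hAvA : AvoidHyp GA A B k := by
    intro S hAS' hBS' hcard
    obtain ⟨p, hp, hav⟩ := hAv S hAS' hBS' hcard
    have haux : ∀ {c b : V} (W : G.Walk c b), b = B → Avoids W S → c ∈ RA → c ∉ TA →
        ∃ w : GA.Walk c B, Avoids w S := by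
      intro c b W
      induction W with
      | nil =>
        intro hb _ hc _
        exact absurd (hb ▸ hc) hBRA
      | @cons c d b hadj q ih =>
        intro hb havW hc hcTA
        have hdS : d ∉ S := havW d (by simp)
        by_cases hdTA : d ∈ TA
        · refine ⟨Walk.cons ?_ (Walk.cons ((hGA_B d).mpr hdTA).symm Walk.nil), ?_⟩
          · exact Or.inl ⟨hadj, Or.inl hc, Or.inr hdTA⟩
          · intro v hv
            simp only [Walk.support_cons, Walk.support_nil, List.mem_cons,
              List.not_mem_nil, or_false] at hv
            rcases hv with rfl | rfl | rfl
            · exact havW v (by simp)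
            · exact hdS
            · exact hBS'
        · have hne : s(c, d) ≠ e := by
            rw [he]
            intro hcd
            rcases Sym2.eq_iff.mp hcd with ⟨rfl, rfl⟩ | ⟨rfl, rfl⟩
            · exact hcTA (by simp [hTA])
            · exact hyRA hc
          have hadj' : G'.Adj c d := by
            rw [hG', deleteEdges_adj]
            exact ⟨hadj, by simpa using hne⟩
          have hdS₀ : d ∉ S₀ := fun hd => hdTA (by simp [hTA, hd])
          obtain ⟨w', hw'⟩ :=
            ih hb (fun u hu => havW u (by simp [hu])) (Reach.extend hc hadj' hdS₀) hdTA
          refine ⟨Walk.cons (Or.inl ⟨hadj, Or.inl hc, Or.inl (Reach.extend hc hadj' hdS₀)⟩) w',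
            fun v hv => ?_⟩
          simp only [Walk.support_cons, List.mem_cons] at hv
          rcases hv with rfl | hv
          · exact havW v (by simp)
          · exact hw' v hv
    obtain ⟨w, hw⟩ := haux p rfl hav hARA hATA
    exact ⟨w.bypass, w.bypass_isPath, fun v hv => hw v (w.support_bypass_subset hv)⟩
  -- GA has strictly fewer edges
  have hcount : GA.edgeSet.ncard < G.edgeSet.ncard := by
    have hNBk : k ≤ (G.neighborSet B).ncard := neighbor_card_ge hAB hnadj hAv
    set NB : Set (Sym2 V) := (fun v => s(B,v)) '' (G.neighborSet B) with hNB
    set D : Set (Sym2 V) := insert e NB with hD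
    set AE : Set (Sym2 V) := (fun t => s(B,t)) '' (↑TA : Set V) with hAE
    have hsub : GA.edgeSet ⊆ (G.edgeSet \ D) ∪ AE := by
      intro ed hed
      induction ed using Sym2.ind with
      | _ u v =>
        rw [mem_edgeSet] at hed
        rcases hed with ⟨h1, h2, h3⟩ | ⟨rfl, h2⟩ | ⟨rfl, h2⟩
        · refine Or.inl ⟨G.mem_edgeSet.mpr h1, fun hmem => ?_⟩
          rcases Set.mem_insert_iff.mp hmem with hmem | hmem
          · rw [he] at hmem
            rcases Sym2.eq_iff.mp hmem with ⟨rfl, rfl⟩ | ⟨rfl, rfl⟩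
            · exact hyU h3
            · exact hyU h2
          · obtain ⟨w, _, heq⟩ := hmem
            rcases Sym2.eq_iff.mp heq with ⟨hB, _⟩ | ⟨hB, _⟩
            · exact hBU (by rwa [← hB] at h2)
            · exact hBU (by rwa [← hB] at h3)
        · exact Or.inr ⟨v, h2, rfl⟩
        · exact Or.inr ⟨u, h2, by rw [Sym2.eq_swap]⟩
    have hDsub : D ⊆ G.edgeSet := by
      intro ed hmem
      rcases Set.mem_insert_iff.mp hmem with rfl | ⟨w, hw, heq⟩
      · rw [he, mem_edgeSet]; exact hxy
      · rw [← heq, mem_edgeSet]; exact hw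
    have heNB : e ∉ NB := by
      rintro ⟨w, _, heq⟩
      rw [he] at heq
      rcases Sym2.eq_iff.mp heq with ⟨hB, _⟩ | ⟨hB, _⟩
      · exact hxB hB.symm
      · exact hyB hB.symm
    have hNBcard : k ≤ NB.ncard := by
      have hinj : Set.InjOn (fun v => s(B,v)) (G.neighborSet B) := by
        intro a _ b _ hab
        exact (Sym2.congr_right).mp hab
      rw [hNB, Set.ncard_image_of_injOn hinj]
      exact hNBk
    have hDcard : k + 1 ≤ D.ncard := by
      rw [hD, Set.ncard_insert_of_notMem heNB (Set.toFinite NB)]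
      omega
    have hAEcard : AE.ncard ≤ k := by
      calc AE.ncard ≤ (↑TA : Set V).ncard := Set.ncard_image_le (Set.toFinite _)
        _ = TA.card := Set.ncard_coe_finset TA
        _ = S₀.card + 1 := by rw [hTA, Finset.card_insert_of_notMem hxS]
        _ ≤ k := hScard
    have h1 : GA.edgeSet.ncard ≤ (G.edgeSet \ D).ncard + AE.ncard :=
      le_trans (Set.ncard_le_ncard hsub (Set.toFinite _)) (Set.ncard_union_le _ _)
    have h2 : (G.edgeSet \ D).ncard = G.edgeSet.ncard - D.ncard :=
      Set.ncard_diff hDsub (Set.toFinite _)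
    have h3 : D.ncard ≤ G.edgeSet.ncard := Set.ncard_le_ncard hDsub (Set.toFinite _)
    omega
  obtain ⟨P, hPpath, hPdisj⟩ := IH GA hcount A B hAB hnadjA hAvA
  have hdecomp : ∀ i, ∃ (c : V) (h : GA.Adj B c) (q : GA.Walk c A),
      (P i).reverse = Walk.cons h q := fun i => Walk.exists_eq_cons_of_ne hAB.symm (P i).reverse
  choose t ht q hq using hdecomp
  have hP_eq : ∀ i, P i = ((q i).reverse.append (Walk.cons (ht i).symm Walk.nil)) := by
    intro i
    conv_lhs => rw [← Walk.reverse_reverse (P i), hq i]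
    rw [Walk.reverse_cons]
  have hsupp : ∀ i, (P i).support = (q i).reverse.support ++ [B] := by
    intro i
    rw [hP_eq i, Walk.support_append]
    simp
  have hQpath : ∀ i, (q i).reverse.IsPath := by
    intro i
    have h2 := (hPpath i).reverse
    rw [hq i] at h2
    exact h2.of_cons.reverse
  have hBq : ∀ i, B ∉ (q i).reverse.support := by
    intro i hB
    have hnodup := (hPpath i).support_nodup
    rw [hsupp i] at hnodup
    exact List.disjoint_of_nodup_append hnodup hB (by simp)
  have htTA : ∀ i, t i ∈ TA := fun i => (hGA_B (t i)).mp (ht i)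
  have htA : ∀ i, t i ≠ A := by
    intro i hA
    exact hnadjA (hA ▸ (ht i)).symm
  have htB : ∀ i, t i ≠ B := fun i hB => hBTA (hB ▸ htTA i)
  have htsuppP : ∀ i, t i ∈ (P i).support := by
    intro i
    rw [hsupp i]
    exact List.mem_append.mpr (Or.inl ((q i).reverse.end_mem_support))
  have htinj : Function.Injective t := by
    intro i j hij
    by_contra hne
    rcases hPdisj i j hne (t i) (htsuppP i) (by rw [hij]; exact htsuppP j) with h | h
    · exact htA i h
    · exact htB i h
  have hUsupp : ∀ {a b : V} (w : GA.Walk a b), B ∉ w.support → a ∈ U →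
      (∀ v ∈ w.support, v ∈ U) ∧ (∀ ed ∈ w.edges, ed ∈ G.edgeSet) := by
    intro a b w
    induction w with
    | nil =>
      intro _ ha
      exact ⟨by intro v hv; simp at hv; rwa [hv], by simp⟩
    | @cons a d b hadj w ih =>
      intro hB ha
      simp only [Walk.support_cons, List.mem_cons, not_or] at hB
      obtain ⟨haB, hB⟩ := hB
      have hdB : d ≠ B := fun h => hB (h ▸ w.start_mem_support)
      obtain ⟨hG, _, hd⟩ := hGA_nb a d hadj (fun h => haB h.symm) hdB
      obtain ⟨ih1, ih2⟩ := ih hB hd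
      constructor
      · intro v hv
        simp only [Walk.support_cons, List.mem_cons] at hv
        rcases hv with rfl | hv
        · exact ha
        · exact ih1 v hv
      · intro ed hed
        simp only [Walk.edges_cons, List.mem_cons] at hed
        rcases hed with rfl | hed
        · exact G.mem_edgeSet.mpr hG
        · exact ih2 ed hed
  have hQU : ∀ i, ∀ v ∈ (q i).reverse.support, v ∈ U :=
    fun i => (hUsupp _ (hBq i) hAU).1
  have hQedges : ∀ i, ∀ ed ∈ (q i).reverse.edges, ed ∈ G.edgeSet :=
    fun i => (hUsupp _ (hBq i) hAU).2
  refine ⟨t, fun i => ((q i).reverse.transfer G (hQedges i)), htinj, htTA, ?_, ?_, ?_, ?_⟩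
  · -- surjectivity onto TA
    have hTAcard : TA.card ≤ k := by
      rw [hTA, Finset.card_insert_of_notMem hxS]
      omega
    have himg : Finset.univ.image t = TA := by
      apply Finset.eq_of_subset_of_card_le
      · intro v hv
        simp only [Finset.mem_image] at hv
        obtain ⟨i, _, rfl⟩ := hv
        exact htTA i
      · rw [Finset.card_image_of_injective _ htinj, Finset.card_univ, Fintype.card_fin]
        exact hTAcard
    intro v hv
    rw [← himg] at hv
    simp only [Finset.mem_image] at hv
    obtain ⟨i, _, rfl⟩ := hv
    exact ⟨i, rfl⟩
  · exact fun i => (hQpath i).transfer _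
  · -- refined support
    intro i v hv
    rw [Walk.support_transfer] at hv
    by_cases hvTA : v ∈ TA
    · left
      have hTAc : TA.card ≤ k := by
        rw [hTA, Finset.card_insert_of_notMem hxS]
        omega
      have himg : Finset.univ.image t = TA := by
        apply Finset.eq_of_subset_of_card_le
        · intro w hw
          simp only [Finset.mem_image] at hw
          obtain ⟨j, _, rfl⟩ := hw
          exact htTA j
        · rw [Finset.card_image_of_injective _ htinj, Finset.card_univ, Fintype.card_fin]
          exact hTAc
      rw [← himg] at hvTA
      simp only [Finset.mem_image] at hvTA
      obtain ⟨j, _, rfl⟩ := hvTA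
      by_cases hji : j = i
      · rw [hji]
      · exfalso
        have hvPi : t j ∈ (P i).support := by
          rw [hsupp i]
          exact List.mem_append.mpr (Or.inl hv)
        rcases hPdisj i j (fun h => hji (by rw [h])) (t j) hvPi (htsuppP j) with h | h
        · exact htA j h
        · exact htB j h
    · right
      refine ⟨?_, hvTA⟩
      rcases hQU i v hv with h | h
      · exact h
      · exact absurd h hvTA
  · -- pairwise disjointness
    intro i j hij v hvi hvj
    rw [Walk.support_transfer] at hvi hvj
    have hvPi : v ∈ (P i).support := by
      rw [hsupp i]; exact List.mem_append.mpr (Or.inl hvi)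
    have hvPj : v ∈ (P j).support := by
      rw [hsupp j]; exact List.mem_append.mpr (Or.inl hvj)
    rcases hPdisj i j hij v hvPi hvPj with h | h
    · exact h
    · exact absurd (h ▸ hvi) (hBq i)

end MengerSide
namespace MengerGlue
open MengerAux MengerAux2 MengerAux3 MengerSide

variable {V : Type*} [Fintype V] [DecidableEq V]
open scoped Classical

lemma glue {G : SimpleGraph V} {k : ℕ} {A B x y : V} {e : Sym2 V} {S₀ : Finset V}
    (IH : ∀ G₂ : SimpleGraph V, G₂.edgeSet.ncard < G.edgeSet.ncard →
        ∀ A' B' : V, A' ≠ B' → ¬ G₂.Adj A' B' → AvoidHyp G₂ A' B' k → KConnected G₂ A' B' k)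
    (hAB : A ≠ B) (hnadj : ¬ G.Adj A B) (hAv : AvoidHyp G A B k)
    (hxy : G.Adj x y) (he : e = s(x,y))
    (hxA : x ≠ A) (hxB : x ≠ B) (hyA : y ≠ A) (hyB : y ≠ B)
    (hAS : A ∉ S₀) (hBS : B ∉ S₀) (hScard : S₀.card < k)
    (hxRA : x ∈ Reach (G.deleteEdges {e}) A S₀)
    (hyRB : y ∈ Reach (G.deleteEdges {e}) B S₀)
    (hSep : ¬ ∃ w : (G.deleteEdges {e}).Walk A B, Avoids w S₀) :
    KConnected G A B k := by
  set G' := G.deleteEdges {e} with hG'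
  set RA := Reach G' A S₀ with hRA
  set RB := Reach G' B S₀ with hRB
  have hdisjR : ∀ v, v ∈ RA → v ∈ RB → False := fun v h1 h2 => hSep (Reach.join h1 h2)
  have hyRA : y ∉ RA := fun h => hdisjR y h hyRB
  have hxRB : x ∉ RB := fun h => hdisjR x hxRA h
  have hBRA : B ∉ RA := fun h => hdisjR B h (Reach.self hBS)
  have hARB : A ∉ RB := fun h => hdisjR A (Reach.self hAS) h
  have hyS : y ∉ S₀ := Reach.not_mem_S hyRB
  have hxS : x ∉ S₀ := Reach.not_mem_S hxRA
  have hyx : y ≠ x := hxy.ne'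
  obtain ⟨t, Q, htinj, htmem, htsurj, hQpath, hQsupp, hQdisj⟩ :=
    side IH hAB hnadj hAv hxy he hxA hxB hyA hyB hAS hBS hyS hScard hxRA hyRA hBRA
  obtain ⟨u, R, huinj, humem, husurj, hRpath, hRsupp, hRdisj⟩ :=
    side IH hAB.symm (fun h => hnadj h.symm) hAv.symm hxy.symm
      (by rw [he, Sym2.eq_swap]) hyB hyA hxB hxA hBS hAS hxS hScard hyRB hxRB hARB
  -- the matching
  set f : V → V := fun v => if v = x then y else v with hf
  have hft : ∀ i, f (t i) ∈ insert y S₀ := by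
    intro i
    rcases Finset.mem_insert.mp (htmem i) with h | h
    · simp [hf, h]
    · have : t i ≠ x := fun hx => hxS (hx ▸ h)
      simp only [hf, if_neg this]
      exact Finset.mem_insert_of_mem h
  choose σ hσ using fun i => husurj (f (t i)) (hft i)
  have hfinj : ∀ i j, f (t i) = f (t j) → t i = t j := by
    intro i j hij
    rcases Finset.mem_insert.mp (htmem i) with h1 | h1 <;>
      rcases Finset.mem_insert.mp (htmem j) with h2 | h2
    · rw [h1, h2]
    · exfalso
      have h2x : t j ≠ x := fun hx => hxS (hx ▸ h2)
      rw [hf] at hij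
      simp only [h1, if_pos, if_neg h2x] at hij
      exact hyS (by rwa [← hij] at h2)
    · exfalso
      have h1x : t i ≠ x := fun hx => hxS (hx ▸ h1)
      rw [hf] at hij
      simp only [h2, if_pos, if_neg h1x] at hij
      exact hyS (by rwa [hij] at h1)
    · have h1x : t i ≠ x := fun hx => hxS (hx ▸ h1)
      have h2x : t j ≠ x := fun hx => hxS (hx ▸ h2)
      rw [hf] at hij
      simpa [if_neg h1x, if_neg h2x] using hij
  have hσinj : Function.Injective σ := by
    intro i j hij
    exact htinj (hfinj i j (by rw [← hσ i, ← hσ j, hij]))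
  -- t i is never in RB, never equals B, etc.
  have htnRB : ∀ i, t i ∉ RB := by
    intro i hmem
    rcases Finset.mem_insert.mp (htmem i) with h | h
    · exact hxRB (h ▸ hmem)
    · exact Reach.not_mem_S hmem h
  have hunRA : ∀ j, u j ∉ RA := by
    intro j hmem
    rcases Finset.mem_insert.mp (humem j) with h | h
    · exact hyRA (h ▸ hmem)
    · exact Reach.not_mem_S hmem h
  have htiny : ∀ i, t i ≠ y := by
    intro i h
    rcases Finset.mem_insert.mp (htmem i) with h1 | h1
    · exact hyx (h ▸ h1)
    · exact hyS (h ▸ h1)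
  -- the bridges
  have huval : ∀ i, t i ≠ x → u (σ i) = t i := by
    intro i h
    rw [hσ i, hf]
    simp [h]
  have huvalx : ∀ i, t i = x → u (σ i) = y := by
    intro i h
    rw [hσ i, hf]
    simp [h]
  -- helper facts for membership analysis
  have hmemRB : ∀ v, v ∈ insert x S₀ → v ∉ RB := by
    intro v hv hvRB
    rcases Finset.mem_insert.mp hv with rfl | hv
    · exact hxRB hvRB
    · exact Reach.not_mem_S hvRB hv
  have hmemRA : ∀ v, v ∈ insert y S₀ → v ∉ RA := by
    intro v hv hvRA
    rcases Finset.mem_insert.mp hv with rfl | hv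
    · exact hyRA hvRA
    · exact Reach.not_mem_S hvRA hv
  have hfeq : ∀ i j, t i = f (t j) → t i = t j := by
    intro i j h
    by_cases hx : t j = x
    · rw [hf] at h
      simp only [hx, if_pos] at h
      exact absurd h (htiny i)
    · rw [hf] at h
      simpa [if_neg hx] using h
  have htR : ∀ i j, t i ∈ (R j).support → t i = u j := by
    intro i j hmem
    rcases hRsupp j (t i) hmem with h | ⟨h, _⟩
    · exact h
    · exact absurd h (hmemRB (t i) (htmem i))
  have htRσ : ∀ i j, t i ∈ (R (σ j)).support → t i = t j := by
    intro i j hmem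
    exact hfeq i j ((htR i (σ j) hmem).trans (hσ j))
  have hQR : ∀ i j, ∀ v, v ∈ (Q i).support → v ∈ (R (σ j)).support → v = t i ∧ t i = t j := by
    intro i j v hvQ hvR
    rcases hQsupp i v hvQ with rfl | ⟨hvRA, hvTA⟩
    · exact ⟨rfl, htRσ i j hvR⟩
    · exfalso
      rcases hRsupp (σ j) v hvR with h | ⟨h, _⟩
      · rw [h, hσ j] at hvRA
        have := hmemRA (f (t j)) ?memins hvRA
        · exact this
        · rcases Finset.mem_insert.mp (htmem j) with hx | hx
          · simp [hf, hx]
          · have : t j ≠ x := fun h' => hxS (h' ▸ hx)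
            simp only [hf, if_neg this]
            exact Finset.mem_insert_of_mem hx
      · exact hdisjR v hvRA h
  -- construct the bridges
  set bridge : ∀ i : Fin k, G.Walk (t i) B := fun i =>
    if h : t i = x then
      Walk.cons (show G.Adj (t i) y by rw [h]; exact hxy)
        (((R (σ i)).reverse).copy (huvalx i h) rfl)
    else ((R (σ i)).reverse).copy (huval i h) rfl with hbridge
  have hbr_supp : ∀ i, ∀ v ∈ (bridge i).support, v = t i ∨ v ∈ (R (σ i)).support := by
    intro i v hv
    rw [hbridge] at hv
    by_cases h : t i = x
    · simp only [dif_pos h, Walk.support_cons, List.mem_cons, Walk.support_copy,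
        Walk.support_reverse, List.mem_reverse] at hv
      exact hv
    · simp only [dif_neg h, Walk.support_copy, Walk.support_reverse, List.mem_reverse] at hv
      exact Or.inr hv
  have hbr_path : ∀ i, (bridge i).IsPath := by
    intro i
    rw [hbridge]
    by_cases h : t i = x
    · simp only [dif_pos h]
      apply Walk.IsPath.cons
      · simp only [Walk.isPath_copy]
        exact (hRpath (σ i)).reverse
      · simp only [Walk.support_copy, Walk.support_reverse, List.mem_reverse]
        intro hmem
        have := htRσ i i hmem
        exact absurd ((htR i (σ i) hmem).trans (huvalx i h)) (htiny i)
    · simp only [dif_neg h, Walk.isPath_copy]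
      exact (hRpath (σ i)).reverse
  -- the glued walks
  refine ⟨fun i => (Q i).append (bridge i), ?_, ?_⟩
  · intro i
    rw [Walk.isPath_def, Walk.support_append]
    apply List.Nodup.append
    · exact (hQpath i).support_nodup
    · exact ((hbr_path i).support_nodup).tail
    · intro v hv hvt
      have hvb : v ∈ (bridge i).support := List.tail_subset _ hvt
      have hne : v ≠ t i := by
        intro hvE
        have hnd := (hbr_path i).support_nodup
        rw [Walk.support_eq_cons] at hnd
        exact (List.nodup_cons.mp hnd).1 (hvE ▸ hvt)
      rcases hbr_supp i v hvb with h | h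
      · exact hne h
      · exact hne (hQR i i v hv h).1
  · intro i j hij v hvi hvj
    rw [Walk.mem_support_append_iff] at hvi hvj
    rcases hvi with hvi | hvi <;> rcases hvj with hvj | hvj
    · exact Or.inl (hQdisj i j hij v hvi hvj)
    · rcases hbr_supp j v hvj with rfl | h
      · rcases hQsupp i (t j) hvi with h | ⟨_, h⟩
        · exact absurd (htinj h) (Ne.symm hij)
        · exact absurd (htmem j) h
      · exact absurd (htinj (hQR i j v hvi h).2) hij
    · rcases hbr_supp i v hvi with rfl | h
      · rcases hQsupp j (t i) hvj with h | ⟨_, h⟩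
        · exact absurd (htinj h.symm) (Ne.symm hij)
        · exact absurd (htmem i) h
      · exact absurd (htinj (hQR j i v hvj h).2) (Ne.symm hij)
    · rcases hbr_supp i v hvi with rfl | h1
      · rcases hbr_supp j (t i) hvj with h | h
        · exact absurd (htinj h.symm) (Ne.symm hij)
        · exact absurd (htinj (htRσ i j h)) hij
      · rcases hbr_supp j v hvj with rfl | h2
        · exact absurd (htinj (htRσ j i h1)) (Ne.symm hij)
        · exact Or.inr (hRdisj (σ i) (σ j) (fun h => hij (hσinj h)) v h1 h2)

end MengerGlue

namespace MengerMain
open MengerAux MengerAux2 MengerAux3 MengerSide MengerGlue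

variable {V : Type*} [Fintype V] [DecidableEq V]
open scoped Classical

theorem menger {k : ℕ} :
    ∀ (n : ℕ) (G : SimpleGraph V) (A B : V), G.edgeSet.ncard ≤ n →
      A ≠ B → ¬ G.Adj A B → AvoidHyp G A B k → KConnected G A B k := by
  intro n
  induction n using Nat.strong_induction_on with
  | _ n IHn =>
  intro G A B hcard hAB hnadj hAv
  have IH : ∀ G₂ : SimpleGraph V, G₂.edgeSet.ncard < G.edgeSet.ncard →
      ∀ A' B' : V, A' ≠ B' → ¬ G₂.Adj A' B' → AvoidHyp G₂ A' B' k → KConnected G₂ A' B' k := by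
    intro G₂ hlt A' B'
    exact IHn G₂.edgeSet.ncard (lt_of_lt_of_le hlt hcard) G₂ A' B' le_rfl
  by_cases hedge : ∃ x y : V, G.Adj x y ∧ x ≠ A ∧ x ≠ B ∧ y ≠ A ∧ y ≠ B
  · obtain ⟨x, y, hxy, hxA, hxB, hyA, hyB⟩ := hedge
    by_cases hsep : ∀ S : Finset V, A ∉ S → B ∉ S → S.card < k →
        ∃ w : (G.deleteEdges {s(x,y)}).Walk A B, Avoids w S
    · -- recurse on G minus the edge
      have hAv' : AvoidHyp (G.deleteEdges {s(x,y)}) A B k := by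
        intro S h1 h2 h3
        obtain ⟨w, hw⟩ := hsep S h1 h2 h3
        exact ⟨w.bypass, w.bypass_isPath, fun v hv => hw v (w.support_bypass_subset hv)⟩
      have hnadj' : ¬ (G.deleteEdges {s(x,y)}).Adj A B := fun h => by
        rw [deleteEdges_adj] at h
        exact hnadj h.1
      have hlt : (G.deleteEdges {s(x,y)}).edgeSet.ncard < G.edgeSet.ncard := by
        rw [edgeSet_deleteEdges]
        apply Set.ncard_lt_ncard ?_ (Set.toFinite _)
        rw [Set.ssubset_iff_subset_ne]
        refine ⟨Set.diff_subset, fun heq => ?_⟩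
        have hm : s(x,y) ∈ G.edgeSet \ {s(x,y)} := heq.symm ▸ (G.mem_edgeSet.mpr hxy)
        exact hm.2 rfl
      obtain ⟨P, h1, h2⟩ := IH _ hlt A B hAB hnadj' hAv'
      have hedges : ∀ i, ∀ ed ∈ (P i).edges, ed ∈ G.edgeSet := by
        intro i ed hed
        have h3 := (P i).edges_subset_edgeSet hed
        rw [edgeSet_deleteEdges] at h3
        exact h3.1
      refine ⟨fun i => (P i).transfer G (hedges i), fun i => (h1 i).transfer _, ?_⟩
      intro i j hij v hvi hvj
      rw [Walk.support_transfer] at hvi hvj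
      exact h2 i j hij v hvi hvj
    · push_neg at hsep
      obtain ⟨S₀, hAS, hBS, hScard, hSep0⟩ := hsep
      have hSep : ¬ ∃ w : (G.deleteEdges {s(x,y)}).Walk A B, Avoids w S₀ := by
        rintro ⟨w, hw⟩
        exact hSep0 w hw
      obtain ⟨p0, hp0, hav0⟩ := hAv S₀ hAS hBS hScard
      rcases orient hSep p0 rfl hp0 hav0 (Reach.self hAS) with ⟨h1, h2⟩ | ⟨h1, h2⟩
      · exact glue IH hAB hnadj hAv hxy rfl hxA hxB hyA hyB hAS hBS hScard h1 h2 hSep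
      · exact glue IH hAB hnadj hAv hxy.symm Sym2.eq_swap hyA hyB hxA hxB hAS hBS hScard
          h1 h2 hSep
  · -- every edge touches A or B: all paths have length two
    push_neg at hedge
    set C : Set V := {v | G.Adj A v ∧ G.Adj v B} with hC
    have hAC : A ∉ C := fun h => G.irrefl h.1
    have hBC : B ∉ C := fun h => G.irrefl h.2
    have hCcard : k ≤ C.ncard := by
      by_contra hlt
      push_neg at hlt
      obtain ⟨p, hp, hav⟩ := hAv (Set.toFinite C).toFinset
        (by simpa [Set.Finite.mem_toFinset] using hAC)
        (by simpa [Set.Finite.mem_toFinset] using hBC)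
        (by rwa [← Set.ncard_eq_toFinset_card])
      obtain ⟨v, hAv1, q, hpq⟩ := Walk.exists_eq_cons_of_ne hAB p
      have hvB : v ≠ B := fun h => hnadj (h ▸ hAv1)
      have hAq : A ∉ q.support := by
        have h3 := hp
        rw [hpq, Walk.cons_isPath_iff] at h3
        exact h3.2
      have hvA : v ≠ A := fun h => hAq (h ▸ q.start_mem_support)
      obtain ⟨w, hvw, r, hqr⟩ := Walk.exists_eq_cons_of_ne hvB q
      have hwA : w ≠ A := fun h => hAq (by
        rw [hqr, Walk.support_cons]
        exact List.mem_cons_of_mem _ (h ▸ r.start_mem_support))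
      have hwB : w = B := hedge v w hvw hvA hvB hwA
      have hvC : v ∈ C := ⟨hAv1, hwB ▸ hvw⟩
      have hvsupp : v ∈ p.support := by rw [hpq]; simp
      exact hav v hvsupp (by rw [Set.Finite.mem_toFinset]; exact hvC)
    -- pick k distinct common neighbors
    have hk' : k ≤ (Set.toFinite C).toFinset.card := by
      rwa [← Set.ncard_eq_toFinset_card]
    obtain ⟨T, hTsub, hTcard⟩ := Finset.exists_subset_card_eq hk'
    let eqv : Fin k ≃ {x // x ∈ T} := (T.equivFin.trans (by rw [hTcard])).symm
    set c : Fin k → V := fun i => (eqv i : V) with hc2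
    have hcC : ∀ i, c i ∈ C := by
      intro i
      have := hTsub (eqv i).2
      rw [Set.Finite.mem_toFinset] at this; exact this
    have hcinj : Function.Injective c := by
      intro i j hij
      have : (eqv i : V) = (eqv j : V) := hij
      exact eqv.injective (Subtype.ext this)
    have hcA : ∀ i, c i ≠ A := fun i h => hAC (h ▸ hcC i)
    have hcB : ∀ i, c i ≠ B := fun i h => hBC (h ▸ hcC i)
    refine ⟨fun i => Walk.cons (hcC i).1.symm.symm
      (Walk.cons (hcC i).2 Walk.nil), ?_, ?_⟩
    · intro i
      rw [Walk.isPath_def]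
      simp only [Walk.support_cons, Walk.support_nil]
      refine List.nodup_cons.mpr ⟨?_, List.nodup_cons.mpr ⟨?_, List.nodup_singleton B⟩⟩
      · simp only [List.mem_cons, List.mem_singleton]
        push_neg
        exact ⟨fun h => hcA i h.symm, hAB, List.not_mem_nil⟩
      · simp only [List.mem_singleton]
        exact hcB i
    · intro i j hij v hvi hvj
      simp only [Walk.support_cons, Walk.support_nil, List.mem_cons, List.mem_singleton,
        List.not_mem_nil, or_false] at hvi hvj
      rcases hvi with rfl | rfl | rfl
      · exact Or.inl rfl
      · rcases hvj with h | h | h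
        · exact absurd h (hcA i)
        · exact absurd (hcinj h) hij
        · exact absurd h (hcB i)
      · exact Or.inr rfl

end MengerMain


/-- Weak `k`-hyper-connectivity implies `k`-connectivity (for non-adjacent
`A`, `B`). -/
theorem weaklyHyperConnected_imp_kConnected
    {V : Type*} [Fintype V] [DecidableEq V] (G : SimpleGraph V)
    (A B : V) (hAB : A ≠ B) (hNotAdj : ¬ G.Adj A B) (k : ℕ) (hk : 1 ≤ k)
    (h : WeaklyHyperConnected G A B k) :
    KConnected G A B k := by
  have hAv : MengerAux.AvoidHyp G A B k := by
    intro S h1 h2 h3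
    obtain ⟨p, hp, hav, _⟩ := h S h1 h2 h3
    exact ⟨p, hp, hav⟩
  exact MengerMain.menger G.edgeSet.ncard G A B le_rfl hAB hNotAdj hAv
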